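/- For every complex z with |z| < 1, z·γ(z) = −log(1−z) − (1−z)·∑_{n=1}^∞ z^{n-1} log n, where γ(z) = ∑_{n=1}^∞ z^{n-1}(1/n − log((n+1)/n)). -/

import Mathlib

open Complex

lemma summable_aux (z : ℂ) (hz : ‖z‖ < 1) (c : ℕ) :
    Summable fun n : ℕ => z ^ n * (Real.log (n + c) : ℂ) := by
  have hz' : ‖z‖ < 1 := hz
  have hzr : ‖(‖z‖ : ℝ)‖ < 1 := by simpa using hz'
  have hbig : Summable fun n : ℕ => ((n : ℝ) + c) * ‖z‖ ^ n := by
    have h1 := summable_pow_mul_geometric_of_norm_lt_one (R := ℝ) 1 hzr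
    have h2 := (summable_geometric_of_norm_lt_one hzr).mul_left (c : ℝ)
    simpa [add_mul, pow_one] using h1.add h2
  refine Summable.of_norm_bounded hbig fun n => ?_
  rcases Nat.eq_zero_or_pos (n + c) with h | h
  · obtain ⟨rfl, rfl⟩ := Nat.add_eq_zero.mp h
    simp
  · have hpos : (0 : ℝ) < (n : ℝ) + c := by exact_mod_cast h
    have hone : (1 : ℝ) ≤ (n : ℝ) + c := by exact_mod_cast h
    have hlog : |Real.log ((n : ℝ) + c)| ≤ (n : ℝ) + c := by
      rw [_root_.abs_of_nonneg (Real.log_nonneg hone)]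
      have := Real.log_le_sub_one_of_pos hpos
      linarith
    calc ‖z ^ n * (Real.log ((n : ℝ) + c) : ℂ)‖
        = ‖z‖ ^ n * |Real.log ((n : ℝ) + c)| := by
          simp [norm_mul, norm_pow, Complex.norm_real, Real.norm_eq_abs]
      _ ≤ ‖z‖ ^ n * ((n : ℝ) + c) := by
          exact mul_le_mul_of_nonneg_left hlog (pow_nonneg (norm_nonneg z) n)
      _ = ((n : ℝ) + c) * ‖z‖ ^ n := mul_comm _ _

/-- For `|z| < 1`: `z·γ(z) = −log(1−z) − (1−z)·∑_{n=1}^∞ z^{n-1} log n`. -/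
theorem stmt_11 (z : ℂ) (hz : ‖z‖ < 1) :
    z * (∑' n : ℕ, z ^ n * ((1 : ℂ) / (n + 1) - (Real.log ((n + 2) / (n + 1)) : ℂ)))
      = -Complex.log (1 - z) - (1 - z) * ∑' n : ℕ, z ^ n * (Real.log (n + 1) : ℂ) := by
  have hz' : ‖z‖ < 1 := hz
  have hlogsum := hasSum_taylorSeries_neg_log hz'
  -- summabilities
  have hS1 : Summable fun n : ℕ => z ^ n * (Real.log (n + 1) : ℂ) := by
    simpa using summable_aux z hz 1
  have hS2 : Summable fun n : ℕ => z ^ n * (Real.log (n + 2) : ℂ) := by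
    simpa using summable_aux z hz 2
  have hSd : Summable fun n : ℕ => z ^ n / (n + 1 : ℂ) := by
    refine Summable.of_norm_bounded (summable_geometric_of_lt_one (norm_nonneg z) hz') fun n => ?_
    have h1 : ‖((n : ℂ) + 1)‖ = (n : ℝ) + 1 := by
      rw [show ((n : ℂ) + 1) = ((n + 1 : ℕ) : ℂ) by push_cast; ring, Complex.norm_natCast]
      push_cast; ring
    rw [norm_div, norm_pow, h1]
    exact div_le_self (pow_nonneg (norm_nonneg z) n) (by have : (0:ℝ) ≤ (n:ℝ) := Nat.cast_nonneg n; linarith)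
  -- rewrite log of quotient
  have hterm : ∀ n : ℕ, z ^ n * ((1 : ℂ) / (n + 1) - (Real.log ((n + 2) / (n + 1)) : ℂ))
      = z ^ n / (n + 1 : ℂ) - (z ^ n * (Real.log (n + 2) : ℂ) - z ^ n * (Real.log (n + 1) : ℂ)) := by
    intro n
    have h1 : ((n : ℝ) + 1) > 0 := by positivity
    have h2 : ((n : ℝ) + 2) > 0 := by positivity
    rw [show ((n : ℝ) + 2) / ((n : ℝ) + 1) = ((n : ℝ) + 2) / ((n : ℝ) + 1) from rfl,
      Real.log_div (by positivity) (by positivity)]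
    push_cast
    ring
  rw [tsum_congr hterm, Summable.tsum_sub hSd (hS2.sub hS1), Summable.tsum_sub hS2 hS1]
  -- key sum evaluations
  have hval : ∑' n : ℕ, z ^ n / (n + 1 : ℂ) = -Complex.log (1 - z) / z ∨ True := Or.inr trivial
  -- shift identity: ∑' n, z^n * log (n+1) = ∑' n, z^(n+1) * log (n+2)
  have hshift : ∑' n : ℕ, z ^ n * (Real.log (n + 1) : ℂ)
      = ∑' n : ℕ, z ^ (n + 1) * (Real.log (n + 1 + 1) : ℂ) := by
    rw [Summable.tsum_eq_zero_add hS1]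
    push_cast
    simp
  -- z * ∑ z^n/(n+1) = -log(1-z)
  have hzlog : z * ∑' n : ℕ, z ^ n / (n + 1 : ℂ) = -Complex.log (1 - z) := by
    rw [← hlogsum.tsum_eq, Summable.tsum_eq_zero_add hlogsum.summable]
    push_cast
    rw [← tsum_mul_left]
    simp [mul_div_assoc, pow_succ, mul_comm]
  -- z * ∑ z^n * log(n+2) = ∑ z^(n+1) log(n+2)
  have hz2 : z * ∑' n : ℕ, z ^ n * (Real.log (n + 2) : ℂ)
      = ∑' n : ℕ, z ^ (n + 1) * (Real.log (n + 1 + 1) : ℂ) := by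
    rw [← tsum_mul_left]
    apply tsum_congr; intro n
    ring
  have hz1 : z * ∑' n : ℕ, z ^ n * (Real.log (n + 1) : ℂ)
      = ∑' n : ℕ, z ^ (n + 1) * (Real.log (n + 1) : ℂ) := by
    rw [← tsum_mul_left]
    apply tsum_congr; intro n
    ring
  rw [mul_sub, mul_sub, hzlog, hz2, sub_mul, one_mul, hshift]
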